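/- arXiv:math/0603176 — 2 statements merged into one kernel-verified Lean document; each statement's English description precedes it below -/
import Mathlib

section
/- Let r : [0,T] → ℝ³ be continuously differentiable with r(t) ≠ 0 for all t. If r'(t) - ((r(t)/|r(t)|) ⬝ r'(t)) (r(t)/|r(t)|) = 0 for all t in [0,T], then there exists a fixed unit vector r∞ and a scalar function λ : [0,T] → ℝ such that r(t) = λ(t) r∞ for all t in [0,T]; explicitly, r(t) = |r(0)| exp(∫₀ᵗ ξ(σ) dσ) · (r(0)/|r(0)|) where ξ(t) = (r(t) ⬝ r'(t))/|r(t)|². -/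
open scoped RealInnerProductSpace

theorem stmt_1 (T : ℝ) (hT : 0 ≤ T) (r : ℝ → EuclideanSpace ℝ (Fin 3))
    (hdiff : Differentiable ℝ r)
    (hcont : ContinuousOn (deriv r) (Set.Icc (0:ℝ) T))
    (hne : ∀ t ∈ Set.Icc (0:ℝ) T, r t ≠ 0)
    (hw : ∀ t ∈ Set.Icc (0:ℝ) T,
      deriv r t - ⟪(‖r t‖⁻¹ • r t), deriv r t⟫ • (‖r t‖⁻¹ • r t) = 0) :
    ∃ (rinf : EuclideanSpace ℝ (Fin 3)) (lam : ℝ → ℝ), ‖rinf‖ = 1 ∧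
      (∀ t ∈ Set.Icc (0:ℝ) T, r t = lam t • rinf) ∧
      rinf = ‖r 0‖⁻¹ • r 0 ∧
      (∀ t ∈ Set.Icc (0:ℝ) T,
        lam t = ‖r 0‖ * Real.exp (∫ σ in (0:ℝ)..t, ⟪r σ, deriv r σ⟫ / ‖r σ‖ ^ 2)) := by
  set ξ : ℝ → ℝ := fun σ => ⟪r σ, deriv r σ⟫ / ‖r σ‖ ^ 2 with hξ
  have h0mem : (0:ℝ) ∈ Set.Icc (0:ℝ) T := ⟨le_rfl, hT⟩
  have hr0 : r 0 ≠ 0 := hne 0 h0mem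
  have hnr0 : ‖r 0‖ ≠ 0 := norm_ne_zero_iff.mpr hr0
  -- the ODE: deriv r t = ξ t • r t on Icc
  have hode : ∀ t ∈ Set.Icc (0:ℝ) T, deriv r t = ξ t • r t := by
    intro t ht
    have h := hw t ht
    have hnr : ‖r t‖ ≠ 0 := norm_ne_zero_iff.mpr (hne t ht)
    rw [sub_eq_zero] at h
    rw [h, real_inner_smul_left, smul_smul]
    congr 1
    simp only [hξ]
    rw [div_eq_mul_inv, sq, mul_inv]
    ring
  -- continuity of ξ on Icc
  have hξcont : ContinuousOn ξ (Set.Icc (0:ℝ) T) := by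
    apply ContinuousOn.div
    · exact ContinuousOn.inner (hdiff.continuous.continuousOn) hcont
    · exact ((hdiff.continuous.norm).continuousOn).pow 2
    · intro t ht
      exact pow_ne_zero 2 (norm_ne_zero_iff.mpr (hne t ht))
  have huIcc : Set.uIcc (0:ℝ) T = Set.Icc (0:ℝ) T := Set.uIcc_of_le hT
  set F : ℝ → ℝ := fun t => ∫ σ in (0:ℝ)..t, ξ σ with hF
  have hFcont : ContinuousOn F (Set.Icc (0:ℝ) T) := by
    have := intervalIntegral.continuousOn_primitive_interval
      (f := ξ) (μ := MeasureTheory.volume) (a := 0) (b := T)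
      (by rw [huIcc]; exact (hξcont.integrableOn_compact isCompact_Icc))
    rwa [huIcc] at this
  have hF0 : F 0 = 0 := intervalIntegral.integral_same
  set g : ℝ → EuclideanSpace ℝ (Fin 3) := fun t => Real.exp (-F t) • r t with hg
  -- g has right derivative 0 on Ico
  have hgderiv : ∀ x ∈ Set.Ico (0:ℝ) T, HasDerivWithinAt g 0 (Set.Ici x) x := by
    intro x hx
    have hxIcc : x ∈ Set.Icc (0:ℝ) T := ⟨hx.1, le_of_lt hx.2⟩
    have hmem : Set.Icc (0:ℝ) T ∈ nhdsWithin x (Set.Ioi x) := by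
      apply Filter.mem_of_superset
        (Filter.inter_mem (mem_nhdsWithin_of_mem_nhds (Iio_mem_nhds hx.2)) self_mem_nhdsWithin)
      intro y hy
      exact ⟨le_trans hx.1 (le_of_lt hy.2), le_of_lt hy.1⟩
    have hint : IntervalIntegrable ξ MeasureTheory.volume 0 x := by
      apply ContinuousOn.intervalIntegrable
      apply hξcont.mono
      rw [Set.uIcc_of_le hx.1]
      exact Set.Icc_subset_Icc le_rfl hxIcc.2
    have hmeas : StronglyMeasurableAtFilter ξ (nhdsWithin x (Set.Ioi x)) MeasureTheory.volume :=
      ⟨Set.Icc (0:ℝ) T, hmem, (hξcont.aestronglyMeasurable measurableSet_Icc)⟩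
    have hcw : ContinuousWithinAt ξ (Set.Ioi x) x :=
      (hξcont x hxIcc).mono_of_mem_nhdsWithin hmem
    have hFd : HasDerivWithinAt F (ξ x) (Set.Ici x) x :=
      intervalIntegral.integral_hasDerivWithinAt_right hint hmeas hcw
    have hexp : HasDerivWithinAt (fun t => Real.exp (-F t))
        (Real.exp (-F x) * (-ξ x)) (Set.Ici x) x := hFd.neg.exp
    have hrd : HasDerivWithinAt r (deriv r x) (Set.Ici x) x :=
      (hdiff x).hasDerivAt.hasDerivWithinAt
    have this : HasDerivWithinAt g (Real.exp (-F x) • deriv r x + (Real.exp (-F x) * -ξ x) • r x)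
        (Set.Ici x) x := hexp.smul hrd
    convert this using 1
    rw [hode x hxIcc, smul_smul, ← add_smul]
    rw [show Real.exp (-F x) * ξ x + Real.exp (-F x) * -ξ x = 0 by ring, zero_smul]
  have hgcont : ContinuousOn g (Set.Icc (0:ℝ) T) :=
    ((hFcont.neg).rexp).smul hdiff.continuous.continuousOn
  have hgc : ∀ t ∈ Set.Icc (0:ℝ) T, g t = g 0 :=
    constant_of_has_deriv_right_zero hgcont hgderiv
  have hrt : ∀ t ∈ Set.Icc (0:ℝ) T, r t = Real.exp (F t) • r 0 := by
    intro t ht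
    have h := hgc t ht
    simp only [hg, hF0, neg_zero, Real.exp_zero, one_smul] at h
    have := congrArg (fun v => Real.exp (F t) • v) h
    simpa [smul_smul, ← Real.exp_add] using this
  refine ⟨‖r 0‖⁻¹ • r 0, fun t => ‖r 0‖ * Real.exp (F t), ?_, ?_, rfl, fun t _ => rfl⟩
  · rw [norm_smul, norm_inv, norm_norm, inv_mul_cancel₀ hnr0]
  · intro t ht
    rw [hrt t ht, smul_smul]
    congr 1
    field_simp
end

section
/- Let Γ : [0,T] → ℝ be differentiable with -1 < Γ(t) < 1 for all t, and suppose Γ'(t) ≤ -c₂ (1 - Γ(t)²) for some constant c₂ > 0. Then Γ(t) ≤ tanh(artanh(Γ(0)) - c₂ t) for all t ∈ [0,T]. -/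
noncomputable def artanh (x : ℝ) : ℝ := (1 / 2) * Real.log ((1 + x) / (1 - x))

lemma tanh_eq' (x : ℝ) : Real.tanh x = (Real.exp (2 * x) - 1) / (Real.exp (2 * x) + 1) := by
  have h : Real.exp (2 * x) = Real.exp x * Real.exp x := by
    rw [← Real.exp_add]; ring_nf
  have hx := Real.exp_pos x
  have hnx := Real.exp_pos (-x)
  rw [Real.tanh_eq_sinh_div_cosh, Real.sinh_eq, Real.cosh_eq, h]
  have hxx : Real.exp (-x) = (Real.exp x)⁻¹ := Real.exp_neg x
  rw [hxx]
  have h1 : Real.exp x * Real.exp x + 1 > 0 := by positivity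
  field_simp

lemma tanh_mono : Monotone Real.tanh := by
  intro a b hab
  rw [tanh_eq', tanh_eq']
  have h := Real.exp_le_exp.2 (by linarith : 2 * a ≤ 2 * b)
  have pa := Real.exp_pos (2 * a)
  have pb := Real.exp_pos (2 * b)
  rw [div_le_div_iff₀ (by positivity) (by positivity)]
  nlinarith

lemma tanh_artanh {x : ℝ} (h1 : -1 < x) (h2 : x < 1) : Real.tanh (artanh x) = x := by
  have hp : (0:ℝ) < (1 + x) / (1 - x) := by
    apply div_pos <;> linarith
  have he : Real.exp (2 * artanh x) = (1 + x) / (1 - x) := by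
    rw [artanh]
    rw [show 2 * ((1/2) * Real.log ((1 + x) / (1 - x))) = Real.log ((1 + x) / (1 - x)) by ring]
    exact Real.exp_log hp
  rw [tanh_eq', he]
  have h1x : (1:ℝ) - x > 0 := by linarith
  field_simp
  ring

lemma artanh_hasDerivAt {x : ℝ} (h1 : -1 < x) (h2 : x < 1) :
    HasDerivAt artanh (1 / (1 - x ^ 2)) x := by
  have hx1 : (0:ℝ) < 1 + x := by linarith
  have hx2 : (0:ℝ) < 1 - x := by linarith
  have hg : HasDerivAt (fun y : ℝ => (1/2) * (Real.log (1 + y) - Real.log (1 - y)))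
      (1 / (1 - x ^ 2)) x := by
    have ha : HasDerivAt (fun y : ℝ => Real.log (1 + y)) (1 / (1 + x)) x := by
      have : HasDerivAt (fun y : ℝ => 1 + y) 1 x := (hasDerivAt_id x).const_add 1
      simpa using this.log (by linarith)
    have hb : HasDerivAt (fun y : ℝ => Real.log (1 - y)) (-1 / (1 - x)) x := by
      have : HasDerivAt (fun y : ℝ => 1 - y) (-1) x := by
        simpa using ((hasDerivAt_id x).const_sub 1)
      simpa using this.log (by linarith)
    have := ((ha.sub hb).const_mul (1/2 : ℝ))
    refine this.congr_deriv ?_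
    have hne : 1 - x ^ 2 ≠ 0 := by nlinarith
    field_simp
    ring
  apply hg.congr_of_eventuallyEq
  have hs : Set.Ioo (-1 : ℝ) 1 ∈ nhds x := Ioo_mem_nhds h1 h2
  filter_upwards [hs] with y hy
  rw [artanh, Real.log_div (by linarith [hy.1]) (by linarith [hy.2])]

theorem stmt_15 (T : ℝ) (hT : 0 ≤ T) (Γ : ℝ → ℝ) (c₂ : ℝ) (hc₂ : 0 < c₂)
    (hdiff : ∀ t ∈ Set.Icc (0:ℝ) T, DifferentiableAt ℝ Γ t)
    (hbound : ∀ t ∈ Set.Icc (0:ℝ) T, -1 < Γ t ∧ Γ t < 1)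
    (hineq : ∀ t ∈ Set.Icc (0:ℝ) T, deriv Γ t ≤ -c₂ * (1 - (Γ t) ^ 2)) :
    ∀ t ∈ Set.Icc (0:ℝ) T, Γ t ≤ Real.tanh (artanh (Γ 0) - c₂ * t) := by
  set F : ℝ → ℝ := fun t => artanh (Γ t) + c₂ * t with hF
  have hFderiv : ∀ t ∈ Set.Icc (0:ℝ) T,
      HasDerivAt F (1 / (1 - (Γ t) ^ 2) * deriv Γ t + c₂) t := by
    intro t ht
    have hb := hbound t ht
    have hG : HasDerivAt Γ (deriv Γ t) t := (hdiff t ht).hasDerivAt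
    have h1 := (artanh_hasDerivAt hb.1 hb.2).comp t hG
    have h2 : HasDerivAt (fun s => c₂ * s) c₂ t := by
      simpa using (hasDerivAt_id t).const_mul c₂
    exact h1.add h2
  have hsq : ∀ t ∈ Set.Icc (0:ℝ) T, 0 < 1 - (Γ t) ^ 2 := by
    intro t ht
    have hb := hbound t ht
    nlinarith [hb.1, hb.2]
  have hanti : AntitoneOn F (Set.Icc 0 T) := by
    apply antitoneOn_of_deriv_nonpos (convex_Icc 0 T)
    · intro t ht
      exact (hFderiv t ht).continuousAt.continuousWithinAt
    · intro t ht
      rw [interior_Icc] at ht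
      exact ((hFderiv t (Set.mem_Icc_of_Ioo ht)).differentiableAt).differentiableWithinAt
    · intro t ht
      rw [interior_Icc] at ht
      have ht' := Set.mem_Icc_of_Ioo ht
      rw [(hFderiv t ht').deriv]
      have hs := hsq t ht'
      have hi := hineq t ht'
      have : 1 / (1 - (Γ t) ^ 2) * deriv Γ t ≤ 1 / (1 - (Γ t) ^ 2) * (-c₂ * (1 - (Γ t) ^ 2)) :=
        mul_le_mul_of_nonneg_left hi (by positivity)
      have heq : 1 / (1 - (Γ t) ^ 2) * (-c₂ * (1 - (Γ t) ^ 2)) = -c₂ := by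
        field_simp
      linarith [heq ▸ this]
  intro t ht
  have h0 : (0:ℝ) ∈ Set.Icc (0:ℝ) T := Set.mem_Icc.2 ⟨le_refl 0, hT⟩
  have hFle : F t ≤ F 0 := hanti h0 ht ht.1
  have hart : artanh (Γ t) ≤ artanh (Γ 0) - c₂ * t := by
    simp only [hF] at hFle
    linarith [hFle]
  have hb := hbound t ht
  calc Γ t = Real.tanh (artanh (Γ t)) := (tanh_artanh hb.1 hb.2).symm
    _ ≤ Real.tanh (artanh (Γ 0) - c₂ * t) := tanh_mono hart
end
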